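/- (Theorem 5.4, zero-range system, open-closed network, detailed balance) Fix N ∈ ℕ. Suppose the symmetry conditions hold: β_{kl}(n_k,n_l;y) = β_{lk}(n_l+1,n_k−1;y) for k ≠ l, y_k = y_l = 0, n_k ≥ 1; θ_{jk}(n_j,n_k;y) = θ_{kj}(n_k+1,n_j−1;y) for y_j ≥ 1, y_k = 0, n_j ≥ 1; (5.8) ε_{ij}(n_i,n_j;y)·[γ_i(n_i−1)]^{y_i} = [γ_j(n_j)]^{y_j}·ε_{ji}(n_j+1,n_i−1;y) for i ≠ j, y_i ≥ 1, y_j ≥ 1, n_i ≥ 1; and (4.11) τ_{jj'}(n;y)·ξ_j/η_j = τ_{j'j}(n;y+e^{j→j'})·ξ_{j'}/η_{j'} for y_j ≥ 1, j' ≠ j. Then on {(y,n) : |n| = N} the weight w(y,n) = ∏_{q∈Λ} [ξ_q γ̄_q(n_q)/η_q]^{y_q} satisfies the detailed balance equations: (i) w(y,n)·β_{kl}(n_k,n_l;y) = w(y, n+e^{k→l})·β_{lk}(n_l+1,n_k−1;y) for y_k = y_l = 0, k ≠ l, n_k ≥ 1; (ii) w(y,n)·ε_{ij}(n_i,n_j;y)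 = w(y, n+e^{i→j})·ε_{ji}(n_j+1,n_i−1;y) for y_i ≥ 1, y_j ≥ 1, i ≠ j, n_i ≥ 1; (iii) w(y,n)·θ_{jk}(n_j,n_k;y) = w(y, n+e^{j→k})·θ_{kj}(n_k+1,n_j−1;y)·[γ_j(n_j−1)]^{y_j} for y_j ≥ 1, y_k = 0, n_j ≥ 1; (iv) w(y,n)·θ_{kj}(n_k,n_j;y)·[γ_j(n_j)]^{y_j} = w(y, n+e^{k→j})·θ_{jk}(n_j+1,n_k−1;y) for y_j ≥ 1, y_k = 0, n_k ≥ 1; (v) w(y,n)·[γ̄_j(n_j)]^{−y_j}·τ_{jj'}(n;y)·[γ̄_{j'}(n_{j'})]^{−y_{j'}} = w(y', n)·[γ̄_j(n_j)]^{−y'_j}·τ_{j'j}(n;y')·[γ̄_{j'}(n_{j'})]^{−y'_{j'}}, where y' = y + e^{j→j'}, for y_j ≥ 1, j' ≠ j; (vi) w(y,n)·ξ_p γ̄_p(n_p) = w(y+e^p, n)·η_p for every p ∈ Λ. -/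

import Mathlib

/-- The `e^k` configuration increment: `n + e^k`. -/
def bump {Λ : Type*} [DecidableEq Λ] (n : Λ → ℕ) (k : Λ) : Λ → ℕ :=
  fun l => n l + (if l = k then 1 else 0)

/-- The jump move `n + e^{i→k} = n - e^i + e^k`. -/
def move {Λ : Type*} [DecidableEq Λ] (n : Λ → ℕ) (i k : Λ) : Λ → ℕ :=
  fun l => n l - (if l = i then 1 else 0) + (if l = k then 1 else 0)

/-- Auxiliary: if `f` and `g` agree off `{i,k}`, `f i * gi = g i` and
`f k = g k * gk`, then `(∏ f) * gi = (∏ g) * gk`. -/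
lemma prod_two_ratio {Λ : Type*} [Fintype Λ] [DecidableEq Λ]
    (f g : Λ → ℝ) (i k : Λ) (hik : i ≠ k) (gi gk : ℝ)
    (h1 : f i * gi = g i) (h2 : f k = g k * gk)
    (hoff : ∀ q, q ≠ i → q ≠ k → f q = g q) :
    (∏ q, f q) * gi = (∏ q, g q) * gk := by
  have hk : k ∈ Finset.univ.erase i :=
    Finset.mem_erase.2 ⟨hik.symm, Finset.mem_univ k⟩
  rw [← Finset.mul_prod_erase Finset.univ f (Finset.mem_univ i),
      ← Finset.mul_prod_erase _ f hk,
      ← Finset.mul_prod_erase Finset.univ g (Finset.mem_univ i),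
      ← Finset.mul_prod_erase _ g hk]
  have hP : ∏ q ∈ (Finset.univ.erase i).erase k, f q
      = ∏ q ∈ (Finset.univ.erase i).erase k, g q := by
    refine Finset.prod_congr rfl fun q hq => ?_
    rw [Finset.mem_erase, Finset.mem_erase] at hq
    exact hoff q hq.2.1 hq.1
  rw [hP, ← h1, h2]; ring

/-- Auxiliary: one-site version. -/
lemma prod_one_ratio {Λ : Type*} [Fintype Λ] [DecidableEq Λ]
    (f g : Λ → ℝ) (p : Λ) (gp : ℝ) (h1 : f p = g p * gp)
    (hoff : ∀ q, q ≠ p → f q = g q) :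
    ∏ q, f q = (∏ q, g q) * gp := by
  rw [← Finset.mul_prod_erase Finset.univ f (Finset.mem_univ p),
      ← Finset.mul_prod_erase Finset.univ g (Finset.mem_univ p)]
  have hP : ∏ q ∈ Finset.univ.erase p, f q = ∏ q ∈ Finset.univ.erase p, g q :=
    Finset.prod_congr rfl fun q hq => hoff q (Finset.mem_erase.1 hq).1
  rw [hP, h1]; ring

/-- Theorem 5.4, zero-range system, open-closed network, detailed
balance: under the symmetry conditions (including (5.8) and (4.11)), on
`{(y,n) : |n| = N}` the weights `w(y,n) = ∏_q [ξ_q γ̄_q(n_q)/η_q]^{y_q}` satisfy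
detailed balance. Here `y : Λ → ℕ` counts distinguished customers per site. -/
theorem zero_range_open_closed_detailed_balance
    (Λ : Type*) [Fintype Λ] [DecidableEq Λ] [Nonempty Λ] (N : ℕ)
    (gam : Λ → ℕ → ℝ)
    (hgam : ∀ p m, 0 < gam p m) (hgam0 : ∀ p, gam p 0 = 1)
    (gamBar : Λ → ℕ → ℝ)
    (hgamBar : ∀ p m, gamBar p m = ∏ u ∈ Finset.range m, gam p u)
    (β θ ε : Λ → Λ → ℕ → ℕ → (Λ → ℕ) → ℝ) (τ : Λ → Λ → (Λ → ℕ) → (Λ → ℕ) → ℝ)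
    (hβnn : ∀ k l a b y, 0 ≤ β k l a b y) (hθnn : ∀ j k a b y, 0 ≤ θ j k a b y)
    (hεnn : ∀ i j a b y, 0 ≤ ε i j a b y) (hτnn : ∀ j j' n y, 0 ≤ τ j j' n y)
    (ξ η : Λ → ℝ) (hξ : ∀ p, 0 < ξ p) (hη : ∀ p, 0 < η p)
    -- symmetry conditions
    (hβ : ∀ (y : Λ → ℕ) (k l : Λ) (a b : ℕ),
      k ≠ l → y k = 0 → y l = 0 → 1 ≤ a →
      β k l a b y = β l k (b + 1) (a - 1) y)
    (hθ : ∀ (y : Λ → ℕ) (j k : Λ) (a b : ℕ),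
      1 ≤ y j → y k = 0 → 1 ≤ a →
      θ j k a b y = θ k j (b + 1) (a - 1) y)
    -- (5.8)
    (hε : ∀ (y : Λ → ℕ) (i j : Λ) (a b : ℕ),
      i ≠ j → 1 ≤ y i → 1 ≤ y j → 1 ≤ a →
      ε i j a b y * gam i (a - 1) ^ (y i) =
        gam j b ^ (y j) * ε j i (b + 1) (a - 1) y)
    -- (4.11)
    (h411 : ∀ (y : Λ → ℕ) (j j' : Λ) (n : Λ → ℕ),
      1 ≤ y j → j' ≠ j →
      τ j j' n y * ξ j / η j = τ j' j n (move y j j') * ξ j' / η j')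
    (w : (Λ → ℕ) → (Λ → ℕ) → ℝ)
    (hw : ∀ (y n : Λ → ℕ), w y n =
      ∏ q, (ξ q * gamBar q (n q) / η q) ^ (y q)) :
    ∀ (y : Λ → ℕ) (n : Λ → ℕ), ∑ s, n s = N →
      -- (i) task jump between unloaded sites
      (∀ k l, y k = 0 → y l = 0 → k ≠ l → 1 ≤ n k →
        w y n * β k l (n k) (n l) y =
          w y (move n k l) * β l k (n l + 1) (n k - 1) y) ∧
      -- (ii) task jump between loaded sites
      (∀ i j, 1 ≤ y i → 1 ≤ y j → i ≠ j → 1 ≤ n i →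
        w y n * ε i j (n i) (n j) y =
          w y (move n i j) * ε j i (n j + 1) (n i - 1) y) ∧
      -- (iii) task jump from a loaded to an unloaded site
      (∀ j k, 1 ≤ y j → y k = 0 → 1 ≤ n j →
        w y n * θ j k (n j) (n k) y =
          w y (move n j k) *
            (θ k j (n k + 1) (n j - 1) y * gam j (n j - 1) ^ (y j))) ∧
      -- (iv) task jump from an unloaded to a loaded site
      (∀ j k, 1 ≤ y j → y k = 0 → 1 ≤ n k →
        w y n * (θ k j (n k) (n j) y * gam j (n j) ^ (y j)) =
          w y (move n k j) * θ j k (n j + 1) (n k - 1) y) ∧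
      -- (v) leap of a distinguished customer
      (∀ j j', 1 ≤ y j → j' ≠ j →
        w y n * (gamBar j (n j) ^ (y j))⁻¹ * τ j j' n y *
            (gamBar j' (n j') ^ (y j'))⁻¹ =
          w (move y j j') n * (gamBar j (n j) ^ (move y j j' j))⁻¹ *
            τ j' j n (move y j j') *
            (gamBar j' (n j') ^ (move y j j' j'))⁻¹) ∧
      -- (vi) arrival of a distinguished customer paired with its exit
      (∀ p, w y n * (ξ p * gamBar p (n p)) = w (bump y p) n * η p) := by
  intro y n _hN
  have hgbpos : ∀ p m, 0 < gamBar p m := fun p m => by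
    rw [hgamBar]; exact Finset.prod_pos fun u _ => hgam p u
  have hgbsucc : ∀ p m, gamBar p (m + 1) = gamBar p m * gam p m := fun p m => by
    rw [hgamBar, hgamBar, Finset.prod_range_succ]
  -- ratio identity for a task move `n + e^{i→k}`
  have hA : ∀ (m : Λ → ℕ) (i k : Λ), i ≠ k → 1 ≤ m i →
      w y (move m i k) * gam i (m i - 1) ^ (y i)
        = w y m * gam k (m k) ^ (y k) := by
    intro m i k hik hmi
    rw [hw, hw]
    refine prod_two_ratio _ _ i k hik _ _ ?_ ?_ ?_
    · have hmv : move m i k i = m i - 1 := by simp [move, hik]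
      have hg : gamBar i (m i) = gamBar i (m i - 1) * gam i (m i - 1) := by
        conv_lhs => rw [show m i = (m i - 1) + 1 from
          (Nat.succ_pred_eq_of_pos hmi).symm]
        exact hgbsucc i (m i - 1)
      rw [hmv, ← mul_pow, hg]
      congr 1; ring
    · have hmv : move m i k k = m k + 1 := by simp [move, Ne.symm hik]
      rw [hmv, hgbsucc, ← mul_pow]
      congr 1; ring
    · intro q hqi hqk
      have : move m i k q = m q := by simp [move, hqi, hqk]
      rw [this]
  -- ratio identity for a distinguished-customer move `y + e^{j→j'}`
  have hB : ∀ (j j' : Λ), j' ≠ j → 1 ≤ y j →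
      w (move y j j') n * (ξ j * gamBar j (n j) / η j)
        = w y n * (ξ j' * gamBar j' (n j') / η j') := by
    intro j j' hj hyj
    rw [hw, hw]
    refine prod_two_ratio _ _ j j' (Ne.symm hj) _ _ ?_ ?_ ?_
    · have hmv : move y j j' j = y j - 1 := by simp [move, Ne.symm hj]
      rw [hmv, ← pow_succ]
      congr 1
      exact Nat.succ_pred_eq_of_pos hyj
    · have hmv : move y j j' j' = y j' + 1 := by simp [move, hj]
      rw [hmv, pow_succ]
    · intro q h1 h2
      have : move y j j' q = y q := by simp [move, h1, h2]
      rw [this]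
  -- ratio identity for an arriving distinguished customer
  have hC : ∀ p, w (bump y p) n = w y n * (ξ p * gamBar p (n p) / η p) := by
    intro p
    rw [hw, hw]
    refine prod_one_ratio _ _ p _ ?_ ?_
    · have : bump y p p = y p + 1 := by simp [bump]
      rw [this, pow_succ]
    · intro q hq
      have : bump y p q = y q := by simp [bump, hq]
      rw [this]
  refine ⟨?_, ?_, ?_, ?_, ?_, ?_⟩
  · -- (i)
    intro k l hyk hyl hkl hnk
    have hwm : w y (move n k l) = w y n := by
      rw [hw, hw]
      refine Finset.prod_congr rfl fun q _ => ?_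
      by_cases hq : q = k
      · subst hq; rw [hyk]; simp
      · by_cases hq' : q = l
        · subst hq'; rw [hyl]; simp
        · have : move n k l q = n q := by simp [move, hq, hq']
          rw [this]
    rw [hwm, hβ y k l (n k) (n l) hkl hyk hyl hnk]
  · -- (ii)
    intro i j hyi hyj hij hni
    have h1 := hε y i j (n i) (n j) hij hyi hyj hni
    have h2 := hA n i j hij hni
    have hgne : gam i (n i - 1) ^ (y i) ≠ 0 := pow_ne_zero _ (hgam i _).ne'
    apply mul_right_cancel₀ hgne
    linear_combination w y n * h1 - ε j i (n j + 1) (n i - 1) y * h2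
  · -- (iii)
    intro j k hyj hyk hnj
    have hjk : j ≠ k := by rintro rfl; omega
    have h2 := hA n j k hjk hnj
    rw [hyk, pow_zero, mul_one] at h2
    rw [hθ y j k (n j) (n k) hyj hyk hnj]
    linear_combination (-(θ k j (n k + 1) (n j - 1) y)) * h2
  · -- (iv)
    intro j k hyj hyk hnk
    have hkj : k ≠ j := by rintro rfl; omega
    have h2 := hA n k j hkj hnk
    rw [hyk, pow_zero, mul_one] at h2
    have hθ' := hθ y j k (n j + 1) (n k - 1) hyj hyk (by omega)
    rw [Nat.sub_add_cancel hnk, Nat.add_sub_cancel] at hθ'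
    rw [← hθ', h2]; ring
  · -- (v)
    intro j j' hyj hj
    have hmj : move y j j' j = y j - 1 := by simp [move, Ne.symm hj]
    have hmj' : move y j j' j' = y j' + 1 := by simp [move, hj]
    have hB' := hB j j' hj hyj
    have h4 := h411 y j j' n hyj hj
    have hAne : gamBar j (n j) ≠ 0 := (hgbpos j (n j)).ne'
    have hBne : gamBar j' (n j') ≠ 0 := (hgbpos j' (n j')).ne'
    have hηj : η j ≠ 0 := (hη j).ne'
    have hηj' : η j' ≠ 0 := (hη j').ne'
    have hξj : ξ j ≠ 0 := (hξ j).ne'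
    have hξj' : ξ j' ≠ 0 := (hξ j').ne'
    have hB2 : w (move y j j') n * ξ j * gamBar j (n j) * η j'
        = w y n * ξ j' * gamBar j' (n j') * η j := by
      field_simp at hB'
      linear_combination hB'
    have h42 : τ j j' n y * ξ j * η j'
        = τ j' j n (move y j j') * ξ j' * η j := by
      field_simp at h4
      linear_combination h4
    have key : w y n * τ j j' n y * gamBar j' (n j')
        = w (move y j j') n * gamBar j (n j) * τ j' j n (move y j j') := by
      apply mul_right_cancel₀ (mul_ne_zero hξj hηj')
      linear_combination w y n * gamBar j' (n j') * h42
        - τ j' j n (move y j j') * hB2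
    have hApow : gamBar j (n j) ^ (y j)
        = gamBar j (n j) ^ (y j - 1) * gamBar j (n j) := by
      conv_lhs => rw [show y j = (y j - 1) + 1 from
        (Nat.succ_pred_eq_of_pos hyj).symm]
      rw [pow_succ]
    rw [hmj, hmj', hApow, pow_succ]
    have hAc : gamBar j (n j) ^ (y j - 1) ≠ 0 := pow_ne_zero _ hAne
    have hBb : gamBar j' (n j') ^ (y j') ≠ 0 := pow_ne_zero _ hBne
    field_simp
    linear_combination key
  · -- (vi)
    intro p
    rw [hC p]
    field_simp
    exact (mul_inv_cancel_right₀ (hη p).ne' _).symm
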